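/- Universality of the rational-exponent space: let q : ℕ → ℚ ∩ [1,∞) be a bijective enumeration of the rationals in [1,∞). Then for every p : ℕ → [1,∞] and every ε > 0 there is a strictly increasing sequence (n_k) of positive integers such that the placement map φ — sending y to the sequence with y₁ at coordinate n₁, y_{k+1} at coordinate n_k + 1 for k ≥ 1, and zero elsewhere — satisfies (1+ε)^{-1}·Φ_p(y) ≤ Φ_q(φ(y)) ≤ (1+ε)·Φ_p(y) for every bounded sequence y. Hence ℓ^{q(·)} contains every space ℓ^{p(·)} almost isometrically. -/

import Mathlib

open scoped ENNReal NNReal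

/-- `t ⊞_p s`: for `p < ∞`, `(t^p + s^p)^(1/p)`; for `p = ∞`, `max t s`. -/
noncomputable def boxPlus (p : ℝ≥0∞) (t s : ℝ) : ℝ :=
  if p = ∞ then max t s else (t ^ p.toReal + s ^ p.toReal) ^ (1 / p.toReal)

/-- The recursively defined seminorms `|||x|||_(k)` (0-indexed). -/
noncomputable def seqNorm (p : ℕ → ℝ≥0∞) (x : ℕ → ℝ) : ℕ → ℝ
  | 0 => boxPlus (p 0) |x 0| |x 1|
  | k + 1 => boxPlus (p (k + 1)) (seqNorm p x k) |x (k + 2)|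

/-- `Φ_p(x) = lim_k |||x|||_(k)`, as the supremum of the nondecreasing sequence. -/
noncomputable def Phi (p : ℕ → ℝ≥0∞) (x : ℕ → ℝ) : ℝ≥0∞ :=
  ⨆ k, ENNReal.ofReal (seqNorm p x k)

/-- `x` is a bounded real sequence, i.e. `x ∈ ℓ^∞`. -/
def IsBddSeq (x : ℕ → ℝ) : Prop := ∃ M : ℝ, ∀ n, |x n| ≤ M

/-- Membership in the variable exponent space `ℓ^{p(·)}`. -/
def MemVLp (p : ℕ → ℝ≥0∞) (x : ℕ → ℝ) : Prop := IsBddSeq x ∧ Phi p x < ⊤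

open scoped Classical in
/-- The placement map: `(place n y) (n 0) = y 0`, `(place n y) (n k + 1) = y (k+1)`,
and all other coordinates vanish. -/
noncomputable def place (n : ℕ → ℕ) (y : ℕ → ℝ) : ℕ → ℝ := fun j =>
  if j = n 0 then y 0
  else if h : ∃ k, j = n k + 1 then y (h.choose + 1)
  else 0

/-! ### Auxiliary lemmas -/

namespace UnivAux

lemma rpow_rpow_inv {t ρ : ℝ} (ht : 0 ≤ t) (hρ : ρ ≠ 0) : (t ^ ρ) ^ (1/ρ) = t := by
  rw [← Real.rpow_mul ht, mul_one_div_cancel hρ, Real.rpow_one]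

lemma one_le_toReal {r : ℝ≥0∞} (h1 : 1 ≤ r) (hne : r ≠ ∞) : 1 ≤ r.toReal := by
  have := ENNReal.toReal_mono hne h1
  simpa using this

/-- Power mean comparison in `ℝ≥0`. -/
lemma pmNN (t s : ℝ≥0) {r r' : ℝ} (hr : 0 < r) (h : r ≤ r') :
    (t ^ r + s ^ r) ^ (1/r) ≤ (2:ℝ≥0) ^ (1/r - 1/r') * (t ^ r' + s ^ r') ^ (1/r') := by
  have hr' : 0 < r' := lt_of_lt_of_le hr h
  have hθ : 1 ≤ r'/r := (one_le_div hr).2 h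
  have J := NNReal.rpow_arith_mean_le_arith_mean2_rpow (1/2) (1/2) (t^r) (s^r)
    (by field_simp; norm_num) hθ
  have e1 : (t ^ r) ^ (r'/r) = t ^ r' := by
    rw [← NNReal.rpow_mul]; congr 1; field_simp
  have e2 : (s ^ r) ^ (r'/r) = s ^ r' := by
    rw [← NNReal.rpow_mul]; congr 1; field_simp
  rw [e1, e2, show (1/2 : ℝ≥0) * t^r + (1/2) * s^r = (1/2) * (t^r + s^r) by ring,
    show (1/2 : ℝ≥0) * t^r' + (1/2) * s^r' = (1/2) * (t^r' + s^r') by ring] at J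
  have J2 := NNReal.rpow_le_rpow J (le_of_lt (one_div_pos.2 hr'))
  rw [← NNReal.rpow_mul, show (r'/r) * (1/r') = 1/r by field_simp] at J2
  have hhalf : ((1/2 : ℝ≥0)) ^ (1/r') = ((2:ℝ≥0) ^ (1/r'))⁻¹ := by
    rw [one_div, NNReal.inv_rpow]
  calc (t ^ r + s ^ r) ^ (1/r)
      = (2 * ((1/2 : ℝ≥0) * (t ^ r + s ^ r))) ^ (1/r) := by
        rw [← mul_assoc]; norm_num
    _ = (2:ℝ≥0) ^ (1/r) * ((1/2 : ℝ≥0) * (t ^ r + s ^ r)) ^ (1/r) := by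
        rw [NNReal.mul_rpow]
    _ ≤ (2:ℝ≥0) ^ (1/r) * ((1/2 : ℝ≥0) * (t ^ r' + s ^ r')) ^ (1/r') :=
        mul_le_mul_right J2 _
    _ = (2:ℝ≥0) ^ (1/r) * (((2:ℝ≥0) ^ (1/r'))⁻¹ * (t ^ r' + s ^ r') ^ (1/r')) := by
        rw [NNReal.mul_rpow, hhalf]
    _ = ((2:ℝ≥0) ^ (1/r) * ((2:ℝ≥0) ^ (1/r'))⁻¹) * (t ^ r' + s ^ r') ^ (1/r') := by
        ring
    _ = (2:ℝ≥0) ^ (1/r - 1/r') * (t ^ r' + s ^ r') ^ (1/r') := by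
        rw [sub_eq_add_neg, NNReal.rpow_add two_ne_zero, NNReal.rpow_neg]

lemma pm_real {t s : ℝ} (ht : 0 ≤ t) (hs : 0 ≤ s) {r r' : ℝ} (hr : 0 < r) (h : r ≤ r') :
    (t ^ r + s ^ r) ^ (1/r) ≤ 2 ^ (1/r - 1/r') * (t ^ r' + s ^ r') ^ (1/r') := by
  lift t to ℝ≥0 using ht
  lift s to ℝ≥0 using hs
  exact_mod_cast pmNN t s hr h

lemma dec_real {t s : ℝ} (ht : 0 ≤ t) (hs : 0 ≤ s) {r r' : ℝ} (hr : 0 < r) (h : r ≤ r') :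
    (t ^ r' + s ^ r') ^ (1/r') ≤ (t ^ r + s ^ r) ^ (1/r) := by
  lift t to ℝ≥0 using ht
  lift s to ℝ≥0 using hs
  exact_mod_cast NNReal.rpow_add_rpow_le t s hr h

/-! ### boxPlus basic lemmas -/

lemma boxPlus_nonneg {r : ℝ≥0∞} (h1 : 1 ≤ r) {t s : ℝ} (ht : 0 ≤ t) (hs : 0 ≤ s) :
    0 ≤ boxPlus r t s := by
  rcases eq_or_ne r ∞ with h | h
  · rw [boxPlus, if_pos h]; exact le_trans ht (le_max_left _ _)
  · rw [boxPlus, if_neg h]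
    exact Real.rpow_nonneg (by positivity) _

lemma le_boxPlus_left {r : ℝ≥0∞} (h1 : 1 ≤ r) {t s : ℝ} (ht : 0 ≤ t) (hs : 0 ≤ s) :
    t ≤ boxPlus r t s := by
  rcases eq_or_ne r ∞ with h | h
  · rw [boxPlus, if_pos h]; exact le_max_left _ _
  · rw [boxPlus, if_neg h]
    have hρ : 1 ≤ r.toReal := one_le_toReal h1 h
    have hρ0 : 0 < r.toReal := lt_of_lt_of_le one_pos hρ
    calc t = (t ^ r.toReal) ^ (1/r.toReal) := (rpow_rpow_inv ht hρ0.ne').symm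
      _ ≤ (t ^ r.toReal + s ^ r.toReal) ^ (1/r.toReal) :=
          Real.rpow_le_rpow (Real.rpow_nonneg ht _)
            (le_add_of_nonneg_right (Real.rpow_nonneg hs _)) (by positivity)

lemma boxPlus_zero_right {r : ℝ≥0∞} (h1 : 1 ≤ r) {t : ℝ} (ht : 0 ≤ t) :
    boxPlus r t 0 = t := by
  rcases eq_or_ne r ∞ with h | h
  · rw [boxPlus, if_pos h]; exact max_eq_left ht
  · rw [boxPlus, if_neg h]
    have hρ : 1 ≤ r.toReal := one_le_toReal h1 h
    have hρ0 : 0 < r.toReal := lt_of_lt_of_le one_pos hρ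
    rw [Real.zero_rpow hρ0.ne', add_zero, rpow_rpow_inv ht hρ0.ne']

lemma boxPlus_zero_left {r : ℝ≥0∞} (h1 : 1 ≤ r) {s : ℝ} (hs : 0 ≤ s) :
    boxPlus r 0 s = s := by
  rcases eq_or_ne r ∞ with h | h
  · rw [boxPlus, if_pos h]; exact max_eq_right hs
  · rw [boxPlus, if_neg h]
    have hρ : 1 ≤ r.toReal := one_le_toReal h1 h
    have hρ0 : 0 < r.toReal := lt_of_lt_of_le one_pos hρ
    rw [Real.zero_rpow hρ0.ne', zero_add, rpow_rpow_inv hs hρ0.ne']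

lemma boxPlus_mono {r : ℝ≥0∞} (h1 : 1 ≤ r) {t t' s s' : ℝ} (ht : 0 ≤ t) (hs : 0 ≤ s)
    (h : t ≤ t') (h' : s ≤ s') : boxPlus r t s ≤ boxPlus r t' s' := by
  rcases eq_or_ne r ∞ with he | he
  · rw [boxPlus, boxPlus, if_pos he, if_pos he]; exact max_le_max h h'
  · rw [boxPlus, boxPlus, if_neg he, if_neg he]
    have hρ : 1 ≤ r.toReal := one_le_toReal h1 he
    have hρ0 : 0 < r.toReal := lt_of_lt_of_le one_pos hρ
    apply Real.rpow_le_rpow (by positivity)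
      (add_le_add (Real.rpow_le_rpow ht h hρ0.le) (Real.rpow_le_rpow hs h' hρ0.le))
      (by positivity)

lemma boxPlus_homog {r : ℝ≥0∞} (h1 : 1 ≤ r) {c t s : ℝ} (hc : 0 ≤ c) (ht : 0 ≤ t)
    (hs : 0 ≤ s) : boxPlus r (c * t) (c * s) = c * boxPlus r t s := by
  rcases eq_or_ne r ∞ with he | he
  · rw [boxPlus, boxPlus, if_pos he, if_pos he]
    rcases le_total t s with h | h
    · rw [max_eq_right h, max_eq_right (by nlinarith)]
    · rw [max_eq_left h, max_eq_left (by nlinarith)]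
  · rw [boxPlus, boxPlus, if_neg he, if_neg he]
    have hρ : 1 ≤ r.toReal := one_le_toReal h1 he
    have hρ0 : 0 < r.toReal := lt_of_lt_of_le one_pos hρ
    rw [Real.mul_rpow hc ht, Real.mul_rpow hc hs, ← mul_add,
      Real.mul_rpow (Real.rpow_nonneg hc _) (by positivity),
      rpow_rpow_inv hc hρ0.ne']

/-! ### seqNorm basic lemmas -/

lemma seqNorm_succ (q : ℕ → ℝ≥0∞) (x : ℕ → ℝ) (k : ℕ) :
    seqNorm q x (k+1) = boxPlus (q (k+1)) (seqNorm q x k) |x (k+2)| := rfl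

lemma seqNorm_zero (q : ℕ → ℝ≥0∞) (x : ℕ → ℝ) :
    seqNorm q x 0 = boxPlus (q 0) |x 0| |x 1| := rfl

lemma seqNorm_nonneg (q : ℕ → ℝ≥0∞) (hq1 : ∀ m, 1 ≤ q m) (x : ℕ → ℝ) :
    ∀ k, 0 ≤ seqNorm q x k := by
  intro k
  induction k with
  | zero => exact boxPlus_nonneg (hq1 0) (abs_nonneg _) (abs_nonneg _)
  | succ k ih => exact boxPlus_nonneg (hq1 (k+1)) ih (abs_nonneg _)

lemma seqNorm_mono (q : ℕ → ℝ≥0∞) (hq1 : ∀ m, 1 ≤ q m) (x : ℕ → ℝ) :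
    Monotone (seqNorm q x) := by
  apply monotone_nat_of_le_succ
  intro k
  rw [seqNorm_succ]
  exact le_boxPlus_left (hq1 (k+1)) (seqNorm_nonneg q hq1 x k) (abs_nonneg _)

/-! ### place lemmas -/

lemma place_at_n0 (n : ℕ → ℕ) (y : ℕ → ℝ) : place n y (n 0) = y 0 := by
  simp [place]

lemma place_at_succ (n : ℕ → ℕ) (hmono : StrictMono n) (y : ℕ → ℝ) (k : ℕ) :
    place n y (n k + 1) = y (k+1) := by
  simp only [place]
  have h0 : n 0 ≤ n k := hmono.monotone (Nat.zero_le k)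
  have hex : ∃ i, n k + 1 = n i + 1 := ⟨k, rfl⟩
  rw [if_neg (by omega), dif_pos hex]
  have hspec := hex.choose_spec
  have h2 : n hex.choose = n k := by omega
  have h3 : hex.choose = k := hmono.injective h2
  rw [h3]

lemma place_eq_zero (n : ℕ → ℕ) (y : ℕ → ℝ) (j : ℕ) (h0 : j ≠ n 0)
    (h1 : ∀ i, j ≠ n i + 1) : place n y j = 0 := by
  simp only [place]
  rw [if_neg h0, dif_neg (by push_neg; exact h1)]

/-! ### structure of seqNorm of a placed sequence -/

section Structure

variable (q : ℕ → ℝ≥0∞) (hq1 : ∀ m, 1 ≤ q m) (n : ℕ → ℕ) (hmono : StrictMono n)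
  (y : ℕ → ℝ)
include hq1 hmono

lemma seqNorm_place_small : ∀ j, j + 1 < n 0 → seqNorm q (place n y) j = 0 := by
  intro j
  induction j with
  | zero =>
    intro hj
    have hx0 : place n y 0 = 0 :=
      place_eq_zero n y 0 (by omega) (fun i => by omega)
    have hx1 : place n y 1 = 0 :=
      place_eq_zero n y 1 (by omega)
        (fun i => by have := hmono.monotone (Nat.zero_le i); omega)
    rw [seqNorm_zero, hx0, hx1, abs_zero, boxPlus_zero_right (hq1 0) le_rfl]
  | succ j ih =>
    intro hj
    have hx : place n y (j+2) = 0 :=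
      place_eq_zero n y (j+2) (by omega)
        (fun i => by have := hmono.monotone (Nat.zero_le i); omega)
    rw [seqNorm_succ, hx, abs_zero,
      boxPlus_zero_right (hq1 (j+1)) (seqNorm_nonneg q hq1 _ j), ih (by omega)]

lemma seqNorm_place_pre : ∀ j, j + 1 = n 0 → seqNorm q (place n y) j = |y 0| := by
  intro j
  cases j with
  | zero =>
    intro hj
    have hx0 : place n y 0 = 0 :=
      place_eq_zero n y 0 (by omega) (fun i => by omega)
    have hx1 : place n y 1 = y 0 := by
      rw [show (1:ℕ) = n 0 by omega]; exact place_at_n0 n y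
    rw [seqNorm_zero, hx0, hx1, abs_zero, boxPlus_zero_left (hq1 0) (abs_nonneg _)]
  | succ m =>
    intro hj
    have h1 : seqNorm q (place n y) m = 0 :=
      seqNorm_place_small q hq1 n hmono y m (by omega)
    have h2 : place n y (m+2) = y 0 := by
      rw [show m + 2 = n 0 by omega]; exact place_at_n0 n y
    rw [seqNorm_succ, h1, h2, boxPlus_zero_left (hq1 (m+1)) (abs_nonneg _)]

lemma seqNorm_place_n0 :
    seqNorm q (place n y) (n 0) = boxPlus (q (n 0)) |y 0| |y 1| := by
  have e1 : place n y (n 0 + 1) = y 1 := place_at_succ n hmono y 0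
  rcases Nat.eq_zero_or_pos (n 0) with h | h
  · have e0 : place n y (n 0) = y 0 := place_at_n0 n y
    rw [h] at e0 e1 ⊢
    rw [seqNorm_zero, e0, e1]
  · obtain ⟨m, hm⟩ : ∃ m, n 0 = m + 1 := ⟨n 0 - 1, by omega⟩
    have hpre := seqNorm_place_pre q hq1 n hmono y m (by omega)
    have e1' : place n y (m + 2) = y 1 := by
      rw [show m + 2 = n 0 + 1 by omega]; exact e1
    rw [hm, seqNorm_succ, hpre, e1']

lemma seqNorm_place_const (k : ℕ) :
    ∀ j, n k ≤ j → j < n (k+1) →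
      seqNorm q (place n y) j = seqNorm q (place n y) (n k) := by
  intro j
  induction j with
  | zero =>
    intro h1 _
    have : n k = 0 := Nat.le_zero.1 h1
    rw [this]
  | succ j ih =>
    intro h1 h2
    rcases eq_or_lt_of_le h1 with he | hlt
    · rw [← he]
    · have hj : n k ≤ j := by omega
      have hn0 : n 0 ≤ n k := hmono.monotone (Nat.zero_le k)
      have hx : place n y (j+2) = 0 := by
        apply place_eq_zero n y (j+2) (by omega)
        intro i hi
        have h5 : n i = j + 1 := by omega
        have h6 : n k < n i := by omega
        have h7 : n i < n (k+1) := by omega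
        have h8 : k < i := hmono.lt_iff_lt.1 h6
        have h9 : i < k + 1 := hmono.lt_iff_lt.1 h7
        omega
      rw [seqNorm_succ, hx, abs_zero,
        boxPlus_zero_right (hq1 (j+1)) (seqNorm_nonneg q hq1 _ j), ih hj (by omega)]

lemma seqNorm_place_succ (k : ℕ) :
    seqNorm q (place n y) (n (k+1)) =
      boxPlus (q (n (k+1))) (seqNorm q (place n y) (n k)) |y (k+2)| := by
  have hlt : n k < n (k+1) := hmono (Nat.lt_succ_self k)
  obtain ⟨m, hm⟩ : ∃ m, n (k+1) = m + 1 := ⟨n (k+1) - 1, by omega⟩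
  have hconst : seqNorm q (place n y) m = seqNorm q (place n y) (n k) :=
    seqNorm_place_const q hq1 n hmono y k m (by omega) (by omega)
  have hx : place n y (m+2) = y (k+2) := by
    rw [show m + 2 = n (k+1) + 1 by omega]; exact place_at_succ n hmono y (k+1)
  rw [hm, seqNorm_succ, hconst, hx]

end Structure

/-! ### choosing good exponents -/

/-- Both-sided comparison of `boxPlus` with factor `2 ^ δ`. -/
def ExpOK (P Q : ℝ≥0∞) (δ : ℝ) : Prop :=
  ∀ t s : ℝ, 0 ≤ t → 0 ≤ s →
    boxPlus P t s ≤ 2 ^ δ * boxPlus Q t s ∧ boxPlus Q t s ≤ 2 ^ δ * boxPlus P t s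

lemma exists_big_index (q : ℕ → ℝ≥0∞) (hq1 : ∀ m, 1 ≤ q m)
    (hsurj : ∀ r : ℚ, 1 ≤ r → ∃ n, q n = ENNReal.ofReal (r : ℝ))
    {a b : ℝ} (ha : 1 ≤ a) (hab : a < b) (N : ℕ) :
    ∃ m, N < m ∧ a < (q m).toReal ∧ (q m).toReal < b := by
  obtain ⟨a', haa', ha'b⟩ := exists_rat_btwn hab
  obtain ⟨b', hb1, hb2⟩ := exists_rat_btwn ha'b
  have hS : (Set.Ioo a' b').Infinite := Set.Ioo_infinite (by exact_mod_cast hb1)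
  set F : Set ℚ := {r : ℚ | ∃ i ≤ N, q i = ENNReal.ofReal (r:ℝ)} with hF
  have hFfin : F.Finite := by
    have hsub : F ⊆ ⋃ i ∈ Set.Iic N, {r : ℚ | q i = ENNReal.ofReal (r:ℝ)} := by
      intro r ⟨i, hi, he⟩
      exact Set.mem_biUnion hi he
    apply Set.Finite.subset _ hsub
    apply Set.Finite.biUnion (Set.finite_Iic N)
    intro i _
    apply Set.Subsingleton.finite
    intro r hr r' hr'
    simp only [Set.mem_setOf_eq] at hr hr'
    have hrr : ENNReal.ofReal (r:ℝ) = ENNReal.ofReal (r':ℝ) := by rw [← hr, ← hr']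
    have hq0 : q i ≠ 0 := by
      intro h0
      have h1 := hq1 i
      rw [h0] at h1
      simp at h1
    have hr0 : (0:ℝ) ≤ (r:ℝ) := by
      by_contra hc
      push_neg at hc
      exact hq0 (by rw [hr, ENNReal.ofReal_eq_zero.2 hc.le])
    have hr0' : (0:ℝ) ≤ (r':ℝ) := by
      by_contra hc
      push_neg at hc
      exact hq0 (by rw [hr', ENNReal.ofReal_eq_zero.2 hc.le])
    have := (ENNReal.ofReal_eq_ofReal_iff hr0 hr0').1 hrr
    exact_mod_cast this
  obtain ⟨r, hrmem, hrF⟩ := (hS.diff hFfin).nonempty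
  obtain ⟨hr1, hr2⟩ := hrmem
  have hra : a < (r:ℝ) := lt_trans haa' (by exact_mod_cast hr1)
  have hrb : (r:ℝ) < b := lt_trans (by exact_mod_cast hr2) hb2
  have hr1' : (1:ℚ) ≤ r := by exact_mod_cast le_of_lt (lt_of_le_of_lt ha hra)
  obtain ⟨m, hm⟩ := hsurj r hr1'
  refine ⟨m, ?_, ?_, ?_⟩
  · by_contra h
    push_neg at h
    exact hrF ⟨m, h, hm⟩
  · rw [hm, ENNReal.toReal_ofReal (by exact_mod_cast le_trans zero_le_one hr1')]
    exact hra
  · rw [hm, ENNReal.toReal_ofReal (by exact_mod_cast le_trans zero_le_one hr1')]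
    exact hrb

lemma existsGood (q : ℕ → ℝ≥0∞) (hq1 : ∀ m, 1 ≤ q m) (hqfin : ∀ m, q m ≠ ∞)
    (hsurj : ∀ r : ℚ, 1 ≤ r → ∃ n, q n = ENNReal.ofReal (r : ℝ))
    (P : ℝ≥0∞) (hP : 1 ≤ P) {δ : ℝ} (hδ : 0 < δ) (N : ℕ) :
    ∃ m, N < m ∧ ExpOK P (q m) δ := by
  have h2δ : (1:ℝ) ≤ 2 ^ δ := Real.one_le_rpow one_le_two hδ.le
  rcases eq_or_ne P ∞ with hPtop | hPfin
  · -- P = ∞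
    set a : ℝ := max 1 (1/δ) with hadef
    obtain ⟨m, hmN, hma, hmb⟩ :=
      exists_big_index q hq1 hsurj (le_max_left 1 (1/δ)) (lt_add_one a) N
    refine ⟨m, hmN, ?_⟩
    intro t s ht hs
    set ρ := (q m).toReal with hρdef
    have hρ1 : 1 ≤ ρ := le_of_lt (lt_of_le_of_lt (le_max_left _ _) hma)
    have hρpos : 0 < ρ := lt_of_lt_of_le one_pos hρ1
    have hinv : 1/ρ ≤ δ := by
      have hda : 1/δ < ρ := lt_of_le_of_lt (le_max_right 1 (1/δ)) hma
      rw [div_le_iff₀ hρpos]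
      have h1 : δ * (1/δ) = 1 := by field_simp
      nlinarith
    have hbox : boxPlus P t s = max t s := by rw [hPtop, boxPlus, if_pos rfl]
    have hboxQ : boxPlus (q m) t s = (t^ρ + s^ρ)^(1/ρ) := by
      rw [boxPlus, if_neg (hqfin m)]
    have hm0 : 0 ≤ max t s := le_trans ht (le_max_left _ _)
    constructor
    · rw [hbox, hboxQ]
      have h2 : max t s ≤ (t^ρ+s^ρ)^(1/ρ) := by
        apply max_le
        · calc t = (t ^ ρ) ^ (1/ρ) := (rpow_rpow_inv ht hρpos.ne').symm
            _ ≤ (t ^ ρ + s ^ ρ) ^ (1/ρ) :=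
              Real.rpow_le_rpow (Real.rpow_nonneg ht _)
                (le_add_of_nonneg_right (Real.rpow_nonneg hs _)) (by positivity)
        · calc s = (s ^ ρ) ^ (1/ρ) := (rpow_rpow_inv hs hρpos.ne').symm
            _ ≤ (t ^ ρ + s ^ ρ) ^ (1/ρ) :=
              Real.rpow_le_rpow (Real.rpow_nonneg hs _)
                (le_add_of_nonneg_left (Real.rpow_nonneg ht _)) (by positivity)
      calc max t s ≤ (t^ρ+s^ρ)^(1/ρ) := h2
        _ ≤ 2^δ * (t^ρ+s^ρ)^(1/ρ) :=
          le_mul_of_one_le_left (Real.rpow_nonneg (by positivity) _) h2δ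
    · rw [hbox, hboxQ]
      have key : (t^ρ+s^ρ)^(1/ρ) ≤ 2^(1/ρ) * max t s := by
        have h3 : t^ρ ≤ (max t s)^ρ := Real.rpow_le_rpow ht (le_max_left _ _) hρpos.le
        have h4 : s^ρ ≤ (max t s)^ρ := Real.rpow_le_rpow hs (le_max_right _ _) hρpos.le
        calc (t^ρ+s^ρ)^(1/ρ) ≤ (2 * (max t s)^ρ)^(1/ρ) :=
              Real.rpow_le_rpow (by positivity) (by linarith) (by positivity)
          _ = 2^(1/ρ) * ((max t s)^ρ)^(1/ρ) :=
              Real.mul_rpow (by norm_num) (by positivity)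
          _ = 2^(1/ρ) * max t s := by rw [rpow_rpow_inv hm0 hρpos.ne']
      calc (t^ρ+s^ρ)^(1/ρ) ≤ 2^(1/ρ) * max t s := key
        _ ≤ 2^δ * max t s :=
          mul_le_mul_of_nonneg_right
            (Real.rpow_le_rpow_of_exponent_le one_le_two hinv) hm0
  · -- P finite
    set r := P.toReal with hrdef
    have hr1 : 1 ≤ r := one_le_toReal hP hPfin
    have hr0 : 0 < r := lt_of_lt_of_le one_pos hr1
    obtain ⟨m, hmN, hma, hmb⟩ :=
      exists_big_index q hq1 hsurj hr1 (lt_add_of_pos_right r hδ) N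
    refine ⟨m, hmN, ?_⟩
    set ρ := (q m).toReal with hρdef
    have hρ : r ≤ ρ := hma.le
    have hρ0 : 0 < ρ := lt_of_lt_of_le hr0 hρ
    have hsub : 1/r - 1/ρ ≤ δ := by
      have e : 1/r - 1/ρ = (ρ - r)/(r * ρ) := by
        rw [div_sub_div _ _ hr0.ne' hρ0.ne', one_mul, mul_one]
      rw [e]
      have h1 : (ρ - r)/(r * ρ) ≤ (ρ - r)/1 := by
        apply div_le_div_of_nonneg_left (by linarith) one_pos
        nlinarith
      rw [div_one] at h1
      linarith
    intro t s ht hs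
    have hEP : boxPlus P t s = (t^r + s^r)^(1/r) := by rw [boxPlus, if_neg hPfin]
    have hEQ : boxPlus (q m) t s = (t^ρ + s^ρ)^(1/ρ) := by
      rw [boxPlus, if_neg (hqfin m)]
    constructor
    · rw [hEP, hEQ]
      calc (t^r+s^r)^(1/r) ≤ 2^(1/r - 1/ρ) * (t^ρ+s^ρ)^(1/ρ) := pm_real ht hs hr0 hρ
        _ ≤ 2^δ * (t^ρ+s^ρ)^(1/ρ) :=
          mul_le_mul_of_nonneg_right
            (Real.rpow_le_rpow_of_exponent_le one_le_two hsub)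
            (Real.rpow_nonneg (by positivity) _)
    · rw [hEP, hEQ]
      calc (t^ρ+s^ρ)^(1/ρ) ≤ (t^r+s^r)^(1/r) := dec_real ht hs hr0 hρ
        _ ≤ 2^δ * (t^r+s^r)^(1/r) :=
          le_mul_of_one_le_left (Real.rpow_nonneg (by positivity) _) h2δ

end UnivAux

open UnivAux in
/-- Universality of the rational-exponent space: if `q` bijectively enumerates
`ℚ ∩ [1,∞)`, then `ℓ^{q(·)}` contains every `ℓ^{p(·)}` almost isometrically,
via placement maps. -/
theorem universal_rational_exponent (q : ℕ → ℝ≥0∞)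
    (hqrat : ∀ n, ∃ r : ℚ, 1 ≤ r ∧ q n = ENNReal.ofReal (r : ℝ))
    (hinj : Function.Injective q)
    (hsurj : ∀ r : ℚ, 1 ≤ r → ∃ n, q n = ENNReal.ofReal (r : ℝ))
    (p : ℕ → ℝ≥0∞) (hp : ∀ m, 1 ≤ p m) (ε : ℝ) (hε : 0 < ε) :
    ∃ n : ℕ → ℕ, StrictMono n ∧ ∀ y : ℕ → ℝ, IsBddSeq y →
      (ENNReal.ofReal (1 + ε))⁻¹ * Phi p y ≤ Phi q (place n y) ∧
      Phi q (place n y) ≤ ENNReal.ofReal (1 + ε) * Phi p y := by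
  classical
  have hq1 : ∀ m, 1 ≤ q m := by
    intro m
    obtain ⟨r, hr, he⟩ := hqrat m
    rw [he]
    exact ENNReal.one_le_ofReal.2 (by exact_mod_cast hr)
  have hqfin : ∀ m, q m ≠ ∞ := by
    intro m
    obtain ⟨r, hr, he⟩ := hqrat m
    rw [he]
    exact ENNReal.ofReal_ne_top
  set ε' := Real.logb 2 (1+ε) with hε'def
  have hε' : 0 < ε' := Real.logb_pos (by norm_num) (by linarith)
  set δ : ℕ → ℝ := fun k => ε' / 2^(k+1) with hδdef
  have hδpos : ∀ k, 0 < δ k := fun k => by positivity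
  have key : ∀ k N, ∃ m, N < m ∧ ExpOK (p k) (q m) (δ k) := fun k N =>
    existsGood q hq1 hqfin hsurj (p k) (hp k) (hδpos k) N
  choose f hf1 hf2 using key
  set n : ℕ → ℕ := fun k => Nat.rec (f 0 0) (fun k ih => f (k+1) ih) k with hn
  have hn0 : n 0 = f 0 0 := rfl
  have hnsucc : ∀ k, n (k+1) = f (k+1) (n k) := fun k => rfl
  have hmono : StrictMono n := strictMono_nat_of_lt_succ (fun k => by
    rw [hnsucc]; exact hf1 (k+1) (n k))
  have hok : ∀ k, ExpOK (p k) (q (n k)) (δ k) := by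
    intro k
    cases k with
    | zero => exact hf2 0 0
    | succ k => rw [hnsucc]; exact hf2 (k+1) (n k)
  refine ⟨n, hmono, ?_⟩
  intro y _
  set C : ℕ → ℝ := fun k => (2:ℝ) ^ (∑ j ∈ Finset.range (k+1), δ j) with hC
  have hC1 : ∀ k, 1 ≤ C k := fun k =>
    Real.one_le_rpow one_le_two (Finset.sum_nonneg fun j _ => (hδpos j).le)
  have hC0 : ∀ k, 0 ≤ C k := fun k => le_trans zero_le_one (hC1 k)
  have hCsucc : ∀ k, C (k+1) = C k * 2 ^ (δ (k+1)) := by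
    intro k
    show (2:ℝ) ^ (∑ j ∈ Finset.range (k+2), δ j) = _
    rw [Finset.sum_range_succ, Real.rpow_add two_pos]
  have hCle : ∀ k, C k ≤ 1 + ε := by
    intro k
    have hsum : ∑ j ∈ Finset.range (k+1), δ j ≤ ε' := by
      have he : ∑ j ∈ Finset.range (k+1), δ j
          = (ε'/2) * ∑ j ∈ Finset.range (k+1), (1/2:ℝ)^j := by
        rw [Finset.mul_sum]
        apply Finset.sum_congr rfl
        intro j _
        simp only [hδdef]
        rw [div_pow, one_pow, pow_succ]
        ring
      rw [he]
      have h2 := sum_geometric_two_le (k+1)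
      calc (ε'/2) * ∑ j ∈ Finset.range (k+1), (1/2:ℝ)^j ≤ (ε'/2) * 2 :=
            mul_le_mul_of_nonneg_left h2 (by positivity)
        _ = ε' := by ring
    calc C k ≤ 2 ^ ε' := Real.rpow_le_rpow_of_exponent_le one_le_two hsum
      _ = 1 + ε := Real.rpow_logb (by norm_num) (by norm_num) (by linarith)
  have hSn0 := seqNorm_place_n0 q hq1 n hmono y
  have hSsucc := seqNorm_place_succ q hq1 n hmono y
  have hpy0 : ∀ k, 0 ≤ seqNorm p y k := seqNorm_nonneg p hp y
  have hqx0 : ∀ k, 0 ≤ seqNorm q (place n y) k := seqNorm_nonneg q hq1 (place n y)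
  have main : ∀ k, seqNorm p y k ≤ C k * seqNorm q (place n y) (n k) ∧
      seqNorm q (place n y) (n k) ≤ C k * seqNorm p y k := by
    intro k
    induction k with
    | zero =>
      obtain ⟨hA, hB⟩ := hok 0 |y 0| |y 1| (abs_nonneg _) (abs_nonneg _)
      have hC0eq : C 0 = 2 ^ (δ 0) := by
        show (2:ℝ) ^ (∑ j ∈ Finset.range 1, δ j) = _
        rw [Finset.sum_range_one]
      rw [seqNorm_zero, hSn0, hC0eq]
      exact ⟨hA, hB⟩
    | succ k ih =>
      obtain ⟨ih1, ih2⟩ := ih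
      have hA0 : 0 ≤ seqNorm p y k := hpy0 k
      have hB0 : 0 ≤ seqNorm q (place n y) (n k) := hqx0 (n k)
      constructor
      · obtain ⟨hP1, _⟩ := hok (k+1) (seqNorm q (place n y) (n k)) |y (k+2)| hB0
          (abs_nonneg _)
        calc seqNorm p y (k+1)
            = boxPlus (p (k+1)) (seqNorm p y k) |y (k+2)| := rfl
          _ ≤ boxPlus (p (k+1)) (C k * seqNorm q (place n y) (n k))
              (C k * |y (k+2)|) :=
            boxPlus_mono (hp _) hA0 (abs_nonneg _) ih1
              (le_mul_of_one_le_left (abs_nonneg _) (hC1 k))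
          _ = C k * boxPlus (p (k+1)) (seqNorm q (place n y) (n k)) |y (k+2)| :=
            boxPlus_homog (hp _) (hC0 k) hB0 (abs_nonneg _)
          _ ≤ C k * (2^(δ (k+1)) *
              boxPlus (q (n (k+1))) (seqNorm q (place n y) (n k)) |y (k+2)|) :=
            mul_le_mul_of_nonneg_left hP1 (hC0 k)
          _ = C (k+1) *
              boxPlus (q (n (k+1))) (seqNorm q (place n y) (n k)) |y (k+2)| := by
            rw [hCsucc]; ring
          _ = C (k+1) * seqNorm q (place n y) (n (k+1)) := by rw [hSsucc k]
      · obtain ⟨_, hP2⟩ := hok (k+1) (seqNorm p y k) |y (k+2)| hA0 (abs_nonneg _)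
        calc seqNorm q (place n y) (n (k+1))
            = boxPlus (q (n (k+1))) (seqNorm q (place n y) (n k)) |y (k+2)| :=
              hSsucc k
          _ ≤ boxPlus (q (n (k+1))) (C k * seqNorm p y k) (C k * |y (k+2)|) :=
            boxPlus_mono (hq1 _) hB0 (abs_nonneg _) ih2
              (le_mul_of_one_le_left (abs_nonneg _) (hC1 k))
          _ = C k * boxPlus (q (n (k+1))) (seqNorm p y k) |y (k+2)| :=
            boxPlus_homog (hq1 _) (hC0 k) hA0 (abs_nonneg _)
          _ ≤ C k * (2^(δ (k+1)) *
              boxPlus (p (k+1)) (seqNorm p y k) |y (k+2)|) :=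
            mul_le_mul_of_nonneg_left hP2 (hC0 k)
          _ = C (k+1) * boxPlus (p (k+1)) (seqNorm p y k) |y (k+2)| := by
            rw [hCsucc]; ring
          _ = C (k+1) * seqNorm p y (k+1) := rfl
  have hup : Phi p y ≤ ENNReal.ofReal (1+ε) * Phi q (place n y) := by
    unfold Phi
    apply iSup_le
    intro k
    calc ENNReal.ofReal (seqNorm p y k)
        ≤ ENNReal.ofReal (C k * seqNorm q (place n y) (n k)) :=
          ENNReal.ofReal_le_ofReal (main k).1
      _ = ENNReal.ofReal (C k) * ENNReal.ofReal (seqNorm q (place n y) (n k)) :=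
          ENNReal.ofReal_mul (hC0 k)
      _ ≤ ENNReal.ofReal (1+ε) * ⨆ m, ENNReal.ofReal (seqNorm q (place n y) m) :=
          mul_le_mul' (ENNReal.ofReal_le_ofReal (hCle k))
            (le_iSup (fun m => ENNReal.ofReal (seqNorm q (place n y) m)) (n k))
  have hdown : Phi q (place n y) ≤ ENNReal.ofReal (1+ε) * Phi p y := by
    unfold Phi
    apply iSup_le
    intro m
    have h1 : seqNorm q (place n y) m ≤ seqNorm q (place n y) (n m) :=
      seqNorm_mono q hq1 (place n y) (hmono.le_apply)
    calc ENNReal.ofReal (seqNorm q (place n y) m)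
        ≤ ENNReal.ofReal (C m * seqNorm p y m) :=
          ENNReal.ofReal_le_ofReal (h1.trans (main m).2)
      _ = ENNReal.ofReal (C m) * ENNReal.ofReal (seqNorm p y m) :=
          ENNReal.ofReal_mul (hC0 m)
      _ ≤ ENNReal.ofReal (1+ε) * ⨆ k, ENNReal.ofReal (seqNorm p y k) :=
          mul_le_mul' (ENNReal.ofReal_le_ofReal (hCle m))
            (le_iSup (fun k => ENNReal.ofReal (seqNorm p y k)) m)
  refine ⟨?_, hdown⟩
  rw [ENNReal.inv_mul_le_iff
    ((ENNReal.ofReal_pos.2 (by linarith)).ne') ENNReal.ofReal_ne_top]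
  exact hup
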